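/- For every real x with 0 ≤ x < 1, the sum of the series Σ_{m=1}^∞ x/(m(m+x)) equals Σ_{k=1}^∞ (−1)^{k+1} ζ(k+1) x^k, where ζ(s) = Σ_{n=1}^∞ 1/n^s denotes the Riemann zeta function evaluated at integers s ≥ 2. -/

import Mathlib

set_option maxHeartbeats 1000000 in


/-- For `0 ≤ x < 1`,
`Σ_{m=1}^∞ x/(m(m+x)) = Σ_{k=1}^∞ (−1)^{k+1} ζ(k+1) x^k`,
where `ζ(s) = Σ_{n=1}^∞ 1/n^s` (here reindexed with `k = j+1`, `j ≥ 0`). -/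
theorem tsum_x_div_m_mul_m_add_x_eq_zeta_series (x : ℝ) (hx0 : 0 ≤ x) (hx1 : x < 1) :
    ∑' m : ℕ, x / ((m + 1 : ℝ) * ((m + 1 : ℝ) + x))
      = ∑' k : ℕ, (-1 : ℝ) ^ k * (∑' n : ℕ, 1 / ((n + 1 : ℝ)) ^ (k + 2)) * x ^ (k + 1) := by
  set f : ℕ → ℕ → ℝ := fun k m => (-1 : ℝ) ^ k * x ^ (k + 1) / ((m + 1 : ℝ)) ^ (k + 2) with hf
  have hmpos : ∀ m : ℕ, (0 : ℝ) < m + 1 := fun m => by positivity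
  -- summability of the dominating product family
  have hgeo : Summable (fun k : ℕ => x ^ (k + 1)) :=
    (summable_geometric_of_lt_one hx0 hx1).mul_left x |>.congr fun k => by ring
  have hm2 : Summable (fun m : ℕ => 1 / ((m + 1 : ℝ)) ^ 2) := by
    have h := (Real.summable_one_div_nat_pow (p := 2)).mpr one_lt_two
    have := (summable_nat_add_iff 1).mpr h
    exact this.congr fun m => by push_cast; ring
  have hdom : Summable (fun p : ℕ × ℕ => x ^ (p.1 + 1) * (1 / ((p.2 + 1 : ℝ)) ^ 2)) :=
    hgeo.mul_of_nonneg hm2 (fun k => by positivity) (fun m => by positivity)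
  have habs : Summable (Function.uncurry f) := by
    apply Summable.of_abs
    apply hdom.of_nonneg_of_le (fun p => abs_nonneg _)
    intro p
    have h1 : |Function.uncurry f p| = x ^ (p.1 + 1) / ((p.2 + 1 : ℝ)) ^ (p.1 + 2) := by
      simp only [Function.uncurry, hf]
      rw [abs_div, abs_mul, abs_pow, abs_pow, abs_neg, abs_one, one_pow, one_mul,
        abs_of_nonneg hx0, abs_of_nonneg (le_of_lt (pow_pos (hmpos p.2) _))]
    rw [h1]
    rw [div_le_iff₀ (by positivity)]
    have hle : ((p.2 + 1 : ℝ)) ^ 2 ≤ ((p.2 + 1 : ℝ)) ^ (p.1 + 2) :=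
      pow_le_pow_right₀ (le_add_of_nonneg_left (Nat.cast_nonneg _)) (by omega)
    calc x ^ (p.1 + 1)
        = x ^ (p.1 + 1) * (1 / ((p.2 + 1 : ℝ)) ^ 2) * ((p.2 + 1 : ℝ)) ^ 2 := by
          field_simp
      _ ≤ x ^ (p.1 + 1) * (1 / ((p.2 + 1 : ℝ)) ^ 2) * ((p.2 + 1 : ℝ)) ^ (p.1 + 2) := by
          apply mul_le_mul_of_nonneg_left hle (by positivity)
  -- per-m evaluation via geometric series
  have hstep1 : ∀ m : ℕ, ∑' k : ℕ, f k m = x / ((m + 1 : ℝ) * ((m + 1 : ℝ) + x)) := by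
    intro m
    have hm := hmpos m
    have hr : ‖(-x) / (m + 1 : ℝ)‖ < 1 := by
      rw [norm_div, norm_neg, Real.norm_of_nonneg hx0, Real.norm_of_nonneg hm.le,
        div_lt_one hm]
      linarith [Nat.cast_nonneg (α := ℝ) m]
    have hg : ∑' k : ℕ, ((-x) / (m + 1 : ℝ)) ^ k = (1 - (-x) / (m + 1 : ℝ))⁻¹ :=
      tsum_geometric_of_norm_lt_one hr
    have hcong : ∀ k : ℕ, f k m = ((-x) / (m + 1 : ℝ)) ^ k * (x / ((m + 1 : ℝ)) ^ 2) := by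
      intro k
      simp only [hf]
      rw [div_pow, neg_pow]
      field_simp
      ring
    rw [tsum_congr hcong, tsum_mul_right, hg]
    have hne : (m + 1 : ℝ) + x ≠ 0 := by positivity
    have hne' : 1 + x + (m : ℝ) ≠ 0 := by positivity
    field_simp
    ring_nf
    field_simp
    ring
  -- per-k evaluation
  have hstep2 : ∀ k : ℕ, ∑' m : ℕ, f k m
      = (-1 : ℝ) ^ k * (∑' n : ℕ, 1 / ((n + 1 : ℝ)) ^ (k + 2)) * x ^ (k + 1) := by
    intro k
    have : ∀ m : ℕ, f k m = ((-1 : ℝ) ^ k * x ^ (k + 1)) * (1 / ((m + 1 : ℝ)) ^ (k + 2)) := by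
      intro m; simp only [hf]; ring
    rw [tsum_congr this, tsum_mul_left]
    ring
  calc ∑' m : ℕ, x / ((m + 1 : ℝ) * ((m + 1 : ℝ) + x))
      = ∑' (m : ℕ) (k : ℕ), f k m := by
        exact tsum_congr fun m => (hstep1 m).symm
    _ = ∑' (k : ℕ) (m : ℕ), f k m := habs.tsum_comm
    _ = ∑' k : ℕ, (-1 : ℝ) ^ k * (∑' n : ℕ, 1 / ((n + 1 : ℝ)) ^ (k + 2)) * x ^ (k + 1) :=
        tsum_congr hstep2
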